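/- For α > 1, the Marchenko–Pastur integral of 1/λ over the bulk equals 1/(α - 1): ∫_{λ₋}^{λ₊} (1/λ)·(√((λ₊ - λ)(λ - λ₋))/(2πλ)) dλ = 1/(α - 1), where λ± = (1 ± √α)². -/

import Mathlib

open Real

lemma mp_hasDeriv (a b c : ℝ) (ha : 0 < a) (hab : a < b) (hc2 : c ^ 2 = a * b)
    (hcpos : 0 < c) (x : ℝ) (hx : x ∈ Set.Ioo a b) :
    HasDerivAt (fun y => -Real.sqrt ((b - y) * (y - a)) / y
        - Real.arcsin ((2 * y - (a + b)) / (b - a))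
        - (a + b) / (2 * c) * Real.arcsin ((2 * (a * b) - (a + b) * y) / (y * (b - a))))
      (Real.sqrt ((b - x) * (x - a)) / x ^ 2) x := by
  obtain ⟨hax, hxb⟩ := hx
  have hx0 : 0 < x := ha.trans hax
  have hba : 0 < b - a := sub_pos.2 hab
  have hgpos : 0 < (b - x) * (x - a) := mul_pos (sub_pos.2 hxb) (sub_pos.2 hax)
  set t := Real.sqrt ((b - x) * (x - a)) with ht
  have htpos : 0 < t := Real.sqrt_pos.2 hgpos
  have ht2 : t ^ 2 = (b - x) * (x - a) := Real.sq_sqrt hgpos.le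
  -- term 1 : -sqrt(g)/x
  have hg : HasDerivAt (fun y => (b - y) * (y - a)) ((-1) * (x - a) + (b - x) * 1) x :=
    (((hasDerivAt_id x).const_sub b).mul ((hasDerivAt_id x).sub_const a))
  have hsg : HasDerivAt (fun y => Real.sqrt ((b - y) * (y - a)))
      (1 / (2 * t) * ((-1) * (x - a) + (b - x) * 1)) x :=
    (Real.hasDerivAt_sqrt hgpos.ne').comp x hg
  have h1 : HasDerivAt (fun y => -Real.sqrt ((b - y) * (y - a)) / y)
      ((-(1 / (2 * t) * ((-1) * (x - a) + (b - x) * 1)) * x - (-t) * 1) / x ^ 2) x :=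
    (hsg.neg).div (hasDerivAt_id x) hx0.ne'
  -- term 2 : arcsin(u1)
  have hu1 : HasDerivAt (fun y => (2 * y - (a + b)) / (b - a)) (2 / (b - a)) x := by
    have h := (((hasDerivAt_id x).const_mul 2).sub_const (a + b)).div_const (b - a)
    simpa using h
  have hu1v : (2 * x - (a + b)) / (b - a) ∈ Set.Ioo (-1 : ℝ) 1 := by
    constructor
    · rw [lt_div_iff₀ hba]; nlinarith
    · rw [div_lt_one hba]; nlinarith
  have h2 : HasDerivAt (fun y => Real.arcsin ((2 * y - (a + b)) / (b - a)))
      (1 / Real.sqrt (1 - ((2 * x - (a + b)) / (b - a)) ^ 2) * (2 / (b - a))) x :=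
    (Real.hasDerivAt_arcsin (ne_of_gt hu1v.1) (ne_of_lt hu1v.2)).comp (h₂ := Real.arcsin) x hu1
  have hs1 : Real.sqrt (1 - ((2 * x - (a + b)) / (b - a)) ^ 2) = 2 * t / (b - a) := by
    have h4 : (b - a) ^ 2 - (2 * x - (a + b)) ^ 2 = (2 * t) ^ 2 := by
      linear_combination (-4) * ht2
    have key : 1 - ((2 * x - (a + b)) / (b - a)) ^ 2 = (2 * t / (b - a)) ^ 2 := by
      rw [div_pow, div_pow, ← h4, sub_div, div_self (by positivity : ((b - a) ^ 2 : ℝ) ≠ 0)]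
    rw [key, Real.sqrt_sq (by positivity)]
  -- term 3 : arcsin(u2)
  have hden : x * (b - a) ≠ 0 := by positivity
  have hu2 : HasDerivAt (fun y => (2 * (a * b) - (a + b) * y) / (y * (b - a)))
      ((-(a + b) * (x * (b - a)) - (2 * (a * b) - (a + b) * x) * (b - a)) / (x * (b - a)) ^ 2)
      x := by
    have hn : HasDerivAt (fun y : ℝ => 2 * (a * b) - (a + b) * y) (-(a + b)) x := by
      simpa using (((hasDerivAt_id x).const_mul (a + b)).const_sub (2 * (a * b)))
    have hd : HasDerivAt (fun y : ℝ => y * (b - a)) (b - a) x := by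
      simpa using (hasDerivAt_id x).mul_const (b - a)
    exact hn.div hd hden
  have hu2v : (2 * (a * b) - (a + b) * x) / (x * (b - a)) ∈ Set.Ioo (-1 : ℝ) 1 := by
    have h0 : 0 < x * (b - a) := by positivity
    constructor
    · rw [lt_div_iff₀ h0]; nlinarith
    · rw [div_lt_one h0]; nlinarith
  have h3 : HasDerivAt (fun y => Real.arcsin ((2 * (a * b) - (a + b) * y) / (y * (b - a))))
      (1 / Real.sqrt (1 - ((2 * (a * b) - (a + b) * x) / (x * (b - a))) ^ 2) *
        ((-(a + b) * (x * (b - a)) - (2 * (a * b) - (a + b) * x) * (b - a)) / (x * (b - a)) ^ 2)) x :=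
    (Real.hasDerivAt_arcsin (ne_of_gt hu2v.1) (ne_of_lt hu2v.2)).comp (h₂ := Real.arcsin) x hu2
  have hs2 : Real.sqrt (1 - ((2 * (a * b) - (a + b) * x) / (x * (b - a))) ^ 2)
      = 2 * c * t / (x * (b - a)) := by
    have h4 : (x * (b - a)) ^ 2 - (2 * (a * b) - (a + b) * x) ^ 2 = (2 * c * t) ^ 2 := by
      linear_combination (-4 * c ^ 2) * ht2 + (-4 * (b - x) * (x - a)) * hc2
    have key : 1 - ((2 * (a * b) - (a + b) * x) / (x * (b - a))) ^ 2
        = (2 * c * t / (x * (b - a))) ^ 2 := by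
      rw [div_pow, div_pow, ← h4, sub_div, div_self (by positivity : ((x * (b - a)) ^ 2 : ℝ) ≠ 0)]
    rw [key, Real.sqrt_sq (by positivity)]
  have := (h1.sub h2).sub (h3.const_mul ((a + b) / (2 * c)))
  refine this.congr_deriv ?_
  symm
  rw [hs1, hs2]
  -- clean forms
  have hD1 : (-(1 / (2 * t) * ((-1) * (x - a) + (b - x) * 1)) * x - (-t) * 1) / x ^ 2
      = ((a + b) * x - 2 * (a * b)) / (2 * t * x ^ 2) := by
    field_simp
    linear_combination 2 * ht2
  have hD2 : 1 / (2 * t / (b - a)) * (2 / (b - a)) = 1 / t := by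
    field_simp
  have hD3 : 1 / (2 * c * t / (x * (b - a))) *
      ((-(a + b) * (x * (b - a)) - (2 * (a * b) - (a + b) * x) * (b - a)) / (x * (b - a)) ^ 2)
      = -(a * b) / (c * t * x) := by
    field_simp
    ring
  rw [hD1, hD2, hD3]
  rw [ht]
  rw [show Real.sqrt ((b - x) * (x - a)) = t from rfl]
  field_simp
  linear_combination 2 * c ^ 2 * ht2 + x * (a + b) * hc2

lemma mp_aux (a b : ℝ) (ha : 0 < a) (hab : a < b) :
    ∫ x in a..b, Real.sqrt ((b - x) * (x - a)) / x ^ 2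
      = π * ((a + b) / (2 * Real.sqrt (a * b)) - 1) := by
  have hba : 0 < b - a := sub_pos.2 hab
  set c := Real.sqrt (a * b) with hc
  have hcpos : 0 < c := Real.sqrt_pos.2 (mul_pos ha (ha.trans hab))
  have hc2 : c ^ 2 = a * b := Real.sq_sqrt (mul_pos ha (ha.trans hab)).le
  set F : ℝ → ℝ := fun y => -Real.sqrt ((b - y) * (y - a)) / y
      - Real.arcsin ((2 * y - (a + b)) / (b - a))
      - (a + b) / (2 * c) * Real.arcsin ((2 * (a * b) - (a + b) * y) / (y * (b - a))) with hF
  have hcont : ContinuousOn F (Set.Icc a b) := by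
    apply ContinuousOn.sub
    apply ContinuousOn.sub
    · exact (((continuous_const.sub continuous_id).mul
        (continuous_id.sub continuous_const)).sqrt.neg.continuousOn.div
        continuousOn_id (fun y hy => (ha.trans_le hy.1).ne'))
    · exact (Real.continuous_arcsin.comp (by continuity)).continuousOn
    · apply ContinuousOn.mul continuousOn_const
      apply Real.continuous_arcsin.comp_continuousOn
      exact (continuous_const.sub (continuous_const.mul continuous_id)).continuousOn.div
        (continuous_id.mul continuous_const).continuousOn
        (fun y hy => (mul_pos (ha.trans_le hy.1) hba).ne')
  have hint : IntervalIntegrable (fun x => Real.sqrt ((b - x) * (x - a)) / x ^ 2)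
      MeasureTheory.volume a b := by
    apply ContinuousOn.intervalIntegrable
    apply ContinuousOn.div
    · exact ((continuous_const.sub continuous_id).mul
        (continuous_id.sub continuous_const)).sqrt.continuousOn
    · exact (continuous_pow 2).continuousOn
    · intro y hy
      rw [Set.uIcc_of_le hab.le] at hy
      exact pow_ne_zero 2 (ha.trans_le hy.1).ne'
  rw [intervalIntegral.integral_eq_sub_of_hasDerivAt_of_le hab.le hcont
    (fun x hx => mp_hasDeriv a b c ha hab hc2 hcpos x hx) hint]
  have e1 : (2 * b - (a + b)) / (b - a) = 1 := by
    rw [div_eq_one_iff_eq hba.ne']; ring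
  have e2 : (2 * (a * b) - (a + b) * b) / (b * (b - a)) = -1 := by
    rw [div_eq_iff (mul_pos (ha.trans hab) hba).ne']; ring
  have e3 : (2 * a - (a + b)) / (b - a) = -1 := by
    rw [div_eq_iff hba.ne']; ring
  have e4 : (2 * (a * b) - (a + b) * a) / (a * (b - a)) = 1 := by
    rw [div_eq_one_iff_eq (mul_pos ha hba).ne']; ring
  simp only [hF, e1, e2, e3, e4, Real.arcsin_one, Real.arcsin_neg_one,
    sub_self, mul_zero, zero_mul, Real.sqrt_zero, neg_zero, zero_div]
  field_simp
  ring

/-- **Marchenko–Pastur integral of `1/λ`, underparameterized case.**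
For `α > 1`, with `λ± = (1 ± √α)²`,
`∫_{λ₋}^{λ₊} (1/λ)·√((λ₊-λ)(λ-λ₋))/(2πλ) dλ = 1/(α-1)`. -/
theorem marchenko_pastur_inverse_moment_underparameterized
    (α : ℝ) (hα : 1 < α) :
    ∫ lam in ((1 - Real.sqrt α) ^ 2)..((1 + Real.sqrt α) ^ 2),
      lam⁻¹ * (Real.sqrt (((1 + Real.sqrt α) ^ 2 - lam) * (lam - (1 - Real.sqrt α) ^ 2)) /
        (2 * π * lam))
      = 1 / (α - 1) := by
  set s := Real.sqrt α with hsdef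
  have hα0 : (0 : ℝ) < α := lt_trans one_pos hα
  have hs2 : s ^ 2 = α := Real.sq_sqrt hα0.le
  have hs1 : 1 < s := by
    have := Real.sqrt_lt_sqrt (le_of_lt one_pos) hα
    simpa using this
  set a := (1 - s) ^ 2 with hadef
  set b := (1 + s) ^ 2 with hbdef
  have ha : 0 < a := by
    have h : (1 - s) ≠ 0 := by intro h; nlinarith
    positivity
  have hab : a < b := by
    have hs0 : 0 < s := lt_trans one_pos hs1
    simp only [hadef, hbdef]; nlinarith
  have key : ∀ lam : ℝ, lam⁻¹ * (Real.sqrt ((b - lam) * (lam - a)) / (2 * π * lam))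
      = (2 * π)⁻¹ * (Real.sqrt ((b - lam) * (lam - a)) / lam ^ 2) := by
    intro lam
    ring
  simp_rw [key]
  rw [intervalIntegral.integral_const_mul, mp_aux a b ha hab]
  have hab2 : a * b = (α - 1) ^ 2 := by
    simp only [hadef, hbdef]; linear_combination (s ^ 2 + α - 2) * hs2
  have hab3 : a + b = 2 * α + 2 := by
    simp only [hadef, hbdef]; linear_combination 2 * hs2
  rw [hab2, Real.sqrt_sq (by linarith : (0:ℝ) ≤ α - 1), hab3]
  have hπ : π ≠ 0 := Real.pi_ne_zero
  have hα1 : α - 1 ≠ 0 := by intro h; nlinarith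
  field_simp
  ring
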